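/- Let k be a field of characteristic zero, n ≥ 2, and consider f = (f_1,...,f_n) = (X_1,...,X_{n-2}, X_{n-1}², X_n²) in k[[X_1,...,X_n]], generating the ideal I. Then the Jacobian J_X(f) = 4·X_{n-1}·X_n belongs to the integral closure of I, the integral closure of I equals (X_1,...,X_{n-2}, X_{n-1}², X_{n-1}X_n, X_n²), but for no rational θ > 1 does J_X(f)^q belong to the integral closure of I^p where θ = p/q. -/

import Mathlib

/-- The formal partial derivative `∂f/∂X_j` of a multivariate formal power series. -/
noncomputable def psDeriv {A : Type*} [CommRing A] {n : ℕ} (j : Fin n)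
    (f : MvPowerSeries (Fin n) A) : MvPowerSeries (Fin n) A :=
  fun m => (m j + 1 : ℕ) * MvPowerSeries.coeff (m + Finsupp.single j 1) f

/-- The Jacobian `J_X(f) = det (∂f_i/∂X_j)` of `n` formal power series in `n` variables. -/
noncomputable def jacobianPS {A : Type*} [CommRing A] {n : ℕ}
    (f : Fin n → MvPowerSeries (Fin n) A) : MvPowerSeries (Fin n) A :=
  Matrix.det (Matrix.of fun i j => psDeriv j (f i))

/-- `x` is integral over the ideal `I`: it satisfies a relation
`x^k + a_1 x^{k-1} + ⋯ + a_k = 0` with `a_i ∈ I^i`. -/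
def MemIntClosure {R : Type*} [CommRing R] (I : Ideal R) (x : R) : Prop :=
  ∃ (k : ℕ) (a : Fin k → R), 0 < k ∧ (∀ i : Fin k, a i ∈ I ^ ((i : ℕ) + 1)) ∧
    x ^ k + ∑ i : Fin k, a i * x ^ (k - ((i : ℕ) + 1)) = 0


set_option maxHeartbeats 1000000

namespace StmtAux
open MvPowerSeries Finsupp
variable {σ : Type*} {R : Type*} [CommRing R]

/-- Regroup a multivariate power series by weighted-homogeneous components. -/
noncomputable def phi (w : σ → ℕ) (f : MvPowerSeries σ R) : PowerSeries (MvPowerSeries σ R) :=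
  PowerSeries.mk fun c => weightedHomogeneousComponent w c f

lemma coeff_phi (w : σ → ℕ) (f : MvPowerSeries σ R) (c : ℕ) :
    PowerSeries.coeff c (phi w f) = weightedHomogeneousComponent w c f :=
  PowerSeries.coeff_mk _ _

lemma phi_one (w : σ → ℕ) : phi w (1 : MvPowerSeries σ R) = 1 := by
  classical
  apply PowerSeries.ext; intro c
  rw [coeff_phi]
  apply MvPowerSeries.ext; intro d
  rw [coeff_weightedHomogeneousComponent, PowerSeries.coeff_one]
  by_cases hd : d = (0 : σ →₀ ℕ)
  · subst hd
    by_cases hc : c = 0 <;>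
      simp [hc, MvPowerSeries.coeff_one, map_zero, eq_comm]
  · by_cases hc : c = 0 <;> simp [hc, MvPowerSeries.coeff_one, hd]

lemma phi_mul (w : σ → ℕ) (f g : MvPowerSeries σ R) :
    phi w (f * g) = phi w f * phi w g := by
  classical
  apply PowerSeries.ext; intro c
  rw [coeff_phi, PowerSeries.coeff_mul]
  simp only [coeff_phi]
  apply MvPowerSeries.ext; intro d
  rw [coeff_weightedHomogeneousComponent, map_sum]
  have hterm : ∀ ab ∈ Finset.HasAntidiagonal.antidiagonal c,
      MvPowerSeries.coeff d ((weightedHomogeneousComponent w ab.1 f) *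
        (weightedHomogeneousComponent w ab.2 g)) =
      ∑ pq ∈ Finset.HasAntidiagonal.antidiagonal d,
        (if ab = (weight w pq.1, weight w pq.2) then
          MvPowerSeries.coeff pq.1 f * MvPowerSeries.coeff pq.2 g else 0) := by
    rintro ⟨a, b⟩ _
    rw [MvPowerSeries.coeff_mul]
    refine Finset.sum_congr rfl ?_
    rintro ⟨p, q⟩ _
    rw [coeff_weightedHomogeneousComponent, coeff_weightedHomogeneousComponent]
    by_cases h1 : weight w p = a
    · by_cases h2 : weight w q = b
      · subst h1; subst h2; simp
      · have hne : ¬ ((a, b) = (weight w p, weight w q)) := by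
          simp only [Prod.mk.injEq, not_and]
          intro _ hb; exact h2 hb.symm
        rw [if_pos h1, if_neg h2, mul_zero, if_neg hne]
    · have hne : ¬ ((a, b) = (weight w p, weight w q)) := by
        simp only [Prod.mk.injEq, not_and]
        intro ha _; exact h1 ha.symm
      rw [if_neg h1, zero_mul, if_neg hne]
  symm
  calc (∑ ab ∈ Finset.HasAntidiagonal.antidiagonal c, MvPowerSeries.coeff d
          ((weightedHomogeneousComponent w ab.1 f) * (weightedHomogeneousComponent w ab.2 g)))
      = ∑ ab ∈ Finset.HasAntidiagonal.antidiagonal c, ∑ pq ∈ Finset.HasAntidiagonal.antidiagonal d,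
          (if ab = (weight w pq.1, weight w pq.2) then
            MvPowerSeries.coeff pq.1 f * MvPowerSeries.coeff pq.2 g else 0) :=
        Finset.sum_congr rfl hterm
    _ = ∑ pq ∈ Finset.HasAntidiagonal.antidiagonal d, ∑ ab ∈ Finset.HasAntidiagonal.antidiagonal c,
          (if ab = (weight w pq.1, weight w pq.2) then
            MvPowerSeries.coeff pq.1 f * MvPowerSeries.coeff pq.2 g else 0) :=
        Finset.sum_comm
    _ = if weight w d = c then MvPowerSeries.coeff d (f * g) else 0 := ?_
  by_cases hc : weight w d = c
  · rw [if_pos hc, MvPowerSeries.coeff_mul]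
    refine Finset.sum_congr rfl ?_
    rintro ⟨p, q⟩ hpq
    rw [Finset.HasAntidiagonal.mem_antidiagonal] at hpq
    rw [Finset.sum_ite_eq' (Finset.HasAntidiagonal.antidiagonal c) (weight w p, weight w q)]
    rw [if_pos]
    rw [Finset.HasAntidiagonal.mem_antidiagonal, ← map_add, hpq, hc]
  · rw [if_neg hc]
    refine Finset.sum_eq_zero ?_
    rintro ⟨p, q⟩ hpq
    rw [Finset.HasAntidiagonal.mem_antidiagonal] at hpq
    rw [Finset.sum_ite_eq' (Finset.HasAntidiagonal.antidiagonal c) (weight w p, weight w q)]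
    rw [if_neg]
    rw [Finset.HasAntidiagonal.mem_antidiagonal, ← map_add, hpq]
    exact hc

lemma order_phi (w : σ → ℕ) (f : MvPowerSeries σ R) :
    (phi w f).order = f.weightedOrder w := by
  apply le_antisymm
  · apply le_weightedOrder
    intro d hd
    have h0 : PowerSeries.coeff (weight w d) (phi w f) = 0 :=
      PowerSeries.coeff_of_lt_order _ hd
    rw [coeff_phi] at h0
    have := congrArg (MvPowerSeries.coeff d) h0
    rwa [coeff_weightedHomogeneousComponent, if_pos rfl, map_zero] at this
  · apply PowerSeries.le_order
    intro c hc
    rw [coeff_phi]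
    apply MvPowerSeries.ext; intro d
    rw [coeff_weightedHomogeneousComponent, map_zero]
    split_ifs with h
    · exact coeff_eq_zero_of_lt_weightedOrder w (by rw [h]; exact hc)
    · rfl

lemma weightedOrder_mul {K : Type*} [Field K] (w : σ → ℕ) (f g : MvPowerSeries σ K) :
    (f * g).weightedOrder w = f.weightedOrder w + g.weightedOrder w := by
  haveI : IsDomain (MvPowerSeries σ K) := NoZeroDivisors.to_isDomain _
  rw [← order_phi, ← order_phi, ← order_phi, phi_mul, PowerSeries.order_mul]

lemma weightedOrder_one {K : Type*} [Field K] (w : σ → ℕ) :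
    (1 : MvPowerSeries σ K).weightedOrder w = 0 := by
  have : (1 : MvPowerSeries σ K) = monomial 0 1 := by
    rw [MvPowerSeries.monomial_zero_one]
  rw [this, weightedOrder_monomial_of_ne_zero w one_ne_zero, map_zero, Nat.cast_zero]

lemma weightedOrder_pow {K : Type*} [Field K] (w : σ → ℕ) (f : MvPowerSeries σ K) (m : ℕ) :
    (f ^ m).weightedOrder w = (m : ℕ∞) * f.weightedOrder w := by
  induction m with
  | zero => simp [weightedOrder_one]
  | succ m ih =>
    rw [pow_succ, weightedOrder_mul, ih]
    push_cast
    ring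

variable {k : Type} [Field k] {n : ℕ}

/-- weights: 2 on the first n-2 variables, 1 on the last two -/
def wt (n : ℕ) : Fin n → ℕ := fun i => if (i : ℕ) < n - 2 then 2 else 1

lemma weight_single (s : Fin n) (e : ℕ) : weight (wt n) (single s e) = e * wt n s := by
  rw [weight_apply, Finsupp.sum_single_index] <;> simp

lemma weight_univ (m : Fin n →₀ ℕ) : weight (wt n) m = ∑ i, m i * wt n i := by
  rw [weight_apply, Finsupp.sum_fintype]
  · simp [mul_comm]
  · intro i; simp

lemma wt_a (hn : 2 ≤ n) : wt n ⟨n - 2, by have := hn; omega⟩ = 1 := by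
  simp only [wt, Fin.val_mk]; rw [if_neg (by have := hn; omega)]

lemma wt_b (hn : 2 ≤ n) : wt n ⟨n - 1, by have := hn; omega⟩ = 1 := by
  simp only [wt, Fin.val_mk]; rw [if_neg (by have := hn; omega)]

/-- the exponents of the generators of the integral closure ideal -/
noncomputable def DD (n : ℕ) (hn : 2 ≤ n) : Fin (n + 1) → (Fin n →₀ ℕ) := fun j =>
  if _ : (j : ℕ) < n - 2 then single ⟨(j : ℕ), by have := hn; omega⟩ 1
  else if (j : ℕ) = n - 2 then single (⟨n - 2, by have := hn; omega⟩ : Fin n) 2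
  else if (j : ℕ) = n - 1 then
    single (⟨n - 2, by have := hn; omega⟩ : Fin n) 1 + single (⟨n - 1, by have := hn; omega⟩ : Fin n) 1
  else single (⟨n - 1, by have := hn; omega⟩ : Fin n) 2

lemma weight_DD (hn : 2 ≤ n) (j : Fin (n + 1)) : weight (wt n) (DD n hn j) = 2 := by
  unfold DD
  split_ifs with h1 h2 h3
  · rw [weight_single]; simp only [one_mul, wt, Fin.val_mk]; rw [if_pos h1]
  · rw [weight_single, wt_a hn]
  · rw [map_add, weight_single, weight_single, wt_a hn, wt_b hn]
  · rw [weight_single, wt_b hn]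

lemma exists_DD_le (hn : 2 ≤ n) (m : Fin n →₀ ℕ) (hW : 2 ≤ weight (wt n) m) :
    ∃ j, DD n hn j ≤ m := by
  by_cases hlow : ∃ i : Fin n, (i : ℕ) < n - 2 ∧ m i ≠ 0
  · obtain ⟨i, hi, hmi⟩ := hlow
    refine ⟨⟨(i : ℕ), by have := hn; omega⟩, ?_⟩
    rw [DD, dif_pos (by simpa using hi)]
    rw [Finsupp.single_le_iff]
    simpa [Nat.one_le_iff_ne_zero, Fin.eta] using hmi
  · push_neg at hlow
    have hab : (⟨n - 2, by have := hn; omega⟩ : Fin n) ≠ ⟨n - 1, by have := hn; omega⟩ := by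
      rw [Fin.ne_iff_vne]; simp only [Fin.val_mk]; omega
    have hsum : weight (wt n) m = m ⟨n - 2, by have := hn; omega⟩ + m ⟨n - 1, by have := hn; omega⟩ := by
      rw [weight_univ]
      rw [← Finset.sum_subset (Finset.subset_univ
        ({⟨n - 2, by have := hn; omega⟩, ⟨n - 1, by have := hn; omega⟩} : Finset (Fin n)))]
      · rw [Finset.sum_pair hab, wt_a hn, wt_b hn, mul_one, mul_one]
      · intro i _ hi
        have hiv : (i : ℕ) < n - 2 := by
          simp only [Finset.mem_insert, Finset.mem_singleton] at hi
          push_neg at hi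
          obtain ⟨h1, h2⟩ := hi
          rw [Fin.ne_iff_vne] at h1 h2
          simp only [Fin.val_mk] at h1 h2
          have := i.isLt
          omega
        rw [hlow i hiv, zero_mul]
    rw [hsum] at hW
    have hcase : 2 ≤ m ⟨n - 2, by have := hn; omega⟩ ∨
        (1 ≤ m ⟨n - 2, by have := hn; omega⟩ ∧ 1 ≤ m ⟨n - 1, by have := hn; omega⟩) ∨
        2 ≤ m ⟨n - 1, by have := hn; omega⟩ := by omega
    rcases hcase with h | ⟨h1, h2⟩ | h
    · refine ⟨⟨n - 2, by have := hn; omega⟩, ?_⟩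
      rw [DD, dif_neg (by simp only [Fin.val_mk]; omega),
        if_pos (by simp only [Fin.val_mk])]
      rw [Finsupp.single_le_iff]; exact h
    · refine ⟨⟨n - 1, by have := hn; omega⟩, ?_⟩
      rw [DD, dif_neg (by simp only [Fin.val_mk]; omega),
        if_neg (by simp only [Fin.val_mk]; omega), if_pos (by simp only [Fin.val_mk])]
      intro i
      rw [Finsupp.add_apply]
      rcases eq_or_ne i ⟨n - 2, by have := hn; omega⟩ with rfl | hi1
      · rw [Finsupp.single_eq_same, Finsupp.single_eq_of_ne' hab.symm]
        simpa using h1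
      · rw [Finsupp.single_eq_of_ne' (Ne.symm hi1)]
        rcases eq_or_ne i ⟨n - 1, by have := hn; omega⟩ with rfl | hi2
        · rw [Finsupp.single_eq_same]; simpa using h2
        · rw [Finsupp.single_eq_of_ne' (Ne.symm hi2)]; simp
    · refine ⟨⟨n, by have := hn; omega⟩, ?_⟩
      rw [DD, dif_neg (by simp only [Fin.val_mk]; omega),
        if_neg (by simp only [Fin.val_mk]; omega), if_neg (by simp only [Fin.val_mk]; omega)]
      rw [Finsupp.single_le_iff]; exact h

open scoped Classical in
/-- pick (the least) generator index whose monomial divides `m`, if any -/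
noncomputable def sel (n : ℕ) (hn : 2 ≤ n) (m : Fin n →₀ ℕ) : WithTop (Fin (n + 1)) :=
  (Finset.univ.filter (fun j => DD n hn j ≤ m)).min

lemma sel_le {hn : 2 ≤ n} {m : Fin n →₀ ℕ} {j : Fin (n + 1)} (h : sel n hn m = (j : WithTop _)) :
    DD n hn j ≤ m := by
  classical
  have := Finset.mem_of_min h
  simp only [Finset.mem_filter] at this
  exact this.2

lemma sel_ne_top {hn : 2 ≤ n} {m : Fin n →₀ ℕ} (hW : 2 ≤ weight (wt n) m) :
    sel n hn m ≠ ⊤ := by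
  classical
  obtain ⟨j, hj⟩ := exists_DD_le hn m hW
  intro h
  rw [sel, Finset.min_eq_top] at h
  have : j ∈ Finset.univ.filter (fun j => DD n hn j ≤ m) := by
    simp only [Finset.mem_filter, Finset.mem_univ, true_and]; exact hj
  rw [h] at this
  exact absurd this (Finset.notMem_empty j)

/-- the coefficient functions for the decomposition -/
noncomputable def hser (n : ℕ) (hn : 2 ≤ n) (x : MvPowerSeries (Fin n) k)
    (j : Fin (n + 1)) : MvPowerSeries (Fin n) k := fun m' =>
  if sel n hn (m' + DD n hn j) = (j : WithTop _) then coeff (m' + DD n hn j) x else 0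

lemma coeff_hser (hn : 2 ≤ n) (x : MvPowerSeries (Fin n) k) (j : Fin (n + 1))
    (m' : Fin n →₀ ℕ) :
    coeff m' (hser n hn x j) =
      if sel n hn (m' + DD n hn j) = (j : WithTop _) then coeff (m' + DD n hn j) x else 0 :=
  rfl

/-- Decomposition: a series of weighted order ≥ 2 is a combination of the generators. -/
lemma decomp (hn : 2 ≤ n) {x : MvPowerSeries (Fin n) k}
    (hx : ∀ d, weight (wt n) d < 2 → coeff d x = 0) :
    x = ∑ j : Fin (n + 1), monomial (DD n hn j) 1 * hser n hn x j := by
  classical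
  apply MvPowerSeries.ext; intro d
  rw [map_sum]
  have hterm : ∀ j : Fin (n + 1),
      coeff d (monomial (DD n hn j) 1 * hser n hn x j) =
      if sel n hn d = (j : WithTop _) then coeff d x else 0 := by
    intro j
    rw [coeff_monomial_mul, one_mul]
    by_cases hle : DD n hn j ≤ d
    · rw [if_pos hle]
      have hcan : d - DD n hn j + DD n hn j = d := tsub_add_cancel_of_le hle
      rw [coeff_hser hn x j, hcan]
    · rw [if_neg hle, eq_comm, if_neg]
      intro hsel
      exact hle (sel_le hsel)
  rw [Finset.sum_congr rfl (fun j _ => hterm j)]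
  rcases hsel : sel n hn d with _ | j0
  · change _ = ∑ j : Fin (n + 1), if (⊤ : WithTop (Fin (n + 1))) = (j : WithTop _) then coeff d x else 0
    rw [Finset.sum_eq_zero (fun j _ => if_neg (fun h => WithTop.top_ne_coe h))]
    have hW : weight (wt n) d < 2 := by
      by_contra hW
      push_neg at hW
      exact (sel_ne_top hW) hsel
    exact hx d hW
  · rw [Finset.sum_eq_single j0]
    · exact (if_pos rfl).symm
    · intro j _ hj
      exact if_neg (fun h => hj (Option.some.inj h).symm)
    · intro h
      exact absurd (Finset.mem_univ j0) h

section Core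
variable {k : Type} [Field k] {n : ℕ}

/-- the ideal of series of weighted order at least `c` -/
noncomputable def ordId (k : Type) [Field k] (n : ℕ) (c : ℕ) :
    Ideal (MvPowerSeries (Fin n) k) where
  carrier := {y | (c : ℕ∞) ≤ y.weightedOrder (wt n)}
  add_mem' := fun {a b} ha hb => le_trans (le_min ha hb) (min_weightedOrder_le_add _)
  zero_mem' := by simp only [Set.mem_setOf_eq, weightedOrder_zero, le_top]
  smul_mem' := fun r y hy => by
    show (c : ℕ∞) ≤ (r * y).weightedOrder (wt n)
    calc (c : ℕ∞) ≤ y.weightedOrder (wt n) := hy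
      _ ≤ r.weightedOrder (wt n) + y.weightedOrder (wt n) := le_add_self
      _ ≤ (r * y).weightedOrder (wt n) := le_weightedOrder_mul _

lemma mem_ordId {c : ℕ} {y : MvPowerSeries (Fin n) k} :
    y ∈ ordId k n c ↔ (c : ℕ∞) ≤ y.weightedOrder (wt n) := Iff.rfl

lemma ordId_mono {c c' : ℕ} (h : c' ≤ c) : ordId k n c ≤ ordId k n c' := by
  intro y hy
  rw [mem_ordId] at hy ⊢
  exact le_trans (by exact_mod_cast h) hy

lemma pow_ordId_le {I : Ideal (MvPowerSeries (Fin n) k)} {c : ℕ} (hI : I ≤ ordId k n c)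
    (m : ℕ) : I ^ m ≤ ordId k n (c * m) := by
  induction m with
  | zero =>
    intro y _
    rw [mem_ordId]
    simp
  | succ m ih =>
    rw [pow_succ]
    refine le_trans (Ideal.mul_mono ih hI) ?_
    rw [Ideal.mul_le]
    intro r hr s hs
    rw [mem_ordId] at hr hs ⊢
    calc ((c * (m + 1) : ℕ) : ℕ∞) = ((c * m : ℕ) : ℕ∞) + (c : ℕ∞) := by push_cast; ring
      _ ≤ _ + _ := add_le_add hr hs
      _ ≤ _ := le_weightedOrder_mul _

/-- The key valuation-theoretic fact: an element whose weighted order is strictly less than `c`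
cannot be integral over an ideal contained in `ordId c`. -/
lemma core {I : Ideal (MvPowerSeries (Fin n) k)} {c : ℕ} (hI : I ≤ ordId k n c)
    {x : MvPowerSeries (Fin n) k} {e : ℕ} (hx : x.weightedOrder (wt n) = (e : ℕ∞))
    (hec : e < c) : ¬ MemIntClosure I x := by
  rintro ⟨K, a, hK, ha, heq⟩
  have hpow : ∀ m : ℕ, (x ^ m).weightedOrder (wt n) = ((e * m : ℕ) : ℕ∞) := by
    intro m
    rw [weightedOrder_pow (wt n), hx]
    push_cast
    ring
  have hmem : x ^ K ∈ ordId k n (e * K + 1) := by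
    have hxK : x ^ K = -∑ i, a i * x ^ (K - ((i : ℕ) + 1)) := eq_neg_of_add_eq_zero_left heq
    rw [hxK]
    refine neg_mem (Ideal.sum_mem _ ?_)
    intro i _
    have h1 : a i ∈ ordId k n (c * ((i : ℕ) + 1)) := pow_ordId_le hI ((i : ℕ) + 1) (ha i)
    rw [mem_ordId] at h1 ⊢
    have h2 : ((c * ((i : ℕ) + 1) + e * (K - ((i : ℕ) + 1)) : ℕ) : ℕ∞) ≤
        (a i * x ^ (K - ((i : ℕ) + 1))).weightedOrder (wt n) := by
      push_cast
      refine le_trans (add_le_add h1 (le_of_eq ?_)) (le_weightedOrder_mul _)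
      rw [hpow]
      push_cast
      ring
    refine le_trans ?_ h2
    rw [Nat.cast_le]
    have hiK : (i : ℕ) + 1 ≤ K := i.isLt
    have h3 : e * K = e * ((i : ℕ) + 1) + e * (K - ((i : ℕ) + 1)) := by
      rw [← Nat.mul_add]
      congr 1
      omega
    have h4 : (e + 1) * ((i : ℕ) + 1) ≤ c * ((i : ℕ) + 1) :=
      Nat.mul_le_mul_right _ hec
    have h5 : (e + 1) * ((i : ℕ) + 1) = e * ((i : ℕ) + 1) + ((i : ℕ) + 1) := by ring
    omega
  rw [mem_ordId, hpow K, Nat.cast_le] at hmem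
  omega

end Core

section Jac
variable {k : Type} [Field k] {n : ℕ}

lemma coeff_psDeriv (j : Fin n) (g : MvPowerSeries (Fin n) k) (d : Fin n →₀ ℕ) :
    coeff d (psDeriv j g) = ((d j + 1 : ℕ) : k) * coeff (d + single j 1) g := rfl

lemma psDeriv_X_self (i : Fin n) : psDeriv i (X i : MvPowerSeries (Fin n) k) = 1 := by
  apply MvPowerSeries.ext; intro d
  classical
  rw [coeff_psDeriv, MvPowerSeries.coeff_X, MvPowerSeries.coeff_one]
  by_cases hd : d = 0
  · subst hd; simp
  · rw [if_neg hd, if_neg, mul_zero]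
    intro hcontra
    exact hd (add_eq_right.mp hcontra)

lemma psDeriv_X_ne {i j : Fin n} (h : j ≠ i) :
    psDeriv j (X i : MvPowerSeries (Fin n) k) = 0 := by
  apply MvPowerSeries.ext; intro d
  classical
  rw [coeff_psDeriv, MvPowerSeries.coeff_X, if_neg, map_zero, mul_zero]
  intro hcontra
  have := DFunLike.congr_fun hcontra j
  rw [Finsupp.add_apply, Finsupp.single_eq_same, Finsupp.single_eq_of_ne' (Ne.symm h)] at this
  omega

lemma psDeriv_X_sq_self (i : Fin n) :
    psDeriv i ((X i : MvPowerSeries (Fin n) k) ^ 2) = 2 * X i := by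
  apply MvPowerSeries.ext; intro d
  classical
  have h2 : (2 : MvPowerSeries (Fin n) k) = C 2 := (map_ofNat _ 2).symm
  rw [coeff_psDeriv, MvPowerSeries.X_pow_eq, MvPowerSeries.coeff_monomial, h2,
    MvPowerSeries.coeff_C_mul, MvPowerSeries.coeff_X]
  have hsingle : (single i 2 : Fin n →₀ ℕ) = single i 1 + single i 1 := by
    rw [← Finsupp.single_add]
  by_cases hd : d = single i 1
  · subst hd
    rw [if_pos (by rw [hsingle]), if_pos rfl, Finsupp.single_eq_same]
    norm_num
  · rw [if_neg, if_neg hd, mul_zero, mul_zero]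
    intro hcontra
    rw [hsingle] at hcontra
    exact hd (add_right_cancel hcontra)

lemma psDeriv_X_sq_ne {i j : Fin n} (h : j ≠ i) :
    psDeriv j ((X i : MvPowerSeries (Fin n) k) ^ 2) = 0 := by
  apply MvPowerSeries.ext; intro d
  classical
  rw [coeff_psDeriv, MvPowerSeries.X_pow_eq, MvPowerSeries.coeff_monomial, if_neg,
    map_zero, mul_zero]
  intro hcontra
  have := DFunLike.congr_fun hcontra j
  rw [Finsupp.add_apply, Finsupp.single_eq_same, Finsupp.single_eq_of_ne' (Ne.symm h)] at this
  omega

lemma fin_ne (hn : 2 ≤ n) : (⟨n - 2, by have := hn; omega⟩ : Fin n) ≠ ⟨n - 1, by have := hn; omega⟩ := by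
  rw [Fin.ne_iff_vne]; simp only [Fin.val_mk]; omega

lemma jacobian_eq (hn : 2 ≤ n) :
    jacobianPS (fun i : Fin n =>
        if (i : ℕ) < n - 2 then (X i : MvPowerSeries (Fin n) k) else X i ^ 2) =
      4 * (X (⟨n - 2, by have := hn; omega⟩ : Fin n) * X (⟨n - 1, by have := hn; omega⟩ : Fin n)) := by
  classical
  have hM : (Matrix.of fun i j : Fin n => psDeriv j
        (if (i : ℕ) < n - 2 then (X i : MvPowerSeries (Fin n) k) else X i ^ 2)) =
      Matrix.diagonal (fun i : Fin n =>
        if (i : ℕ) < n - 2 then 1 else 2 * X i) := by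
    ext i j
    rw [Matrix.of_apply]
    rcases eq_or_ne i j with rfl | hij
    · rw [Matrix.diagonal_apply_eq]
      by_cases hi : (i : ℕ) < n - 2
      · rw [if_pos hi, if_pos hi, psDeriv_X_self]
      · rw [if_neg hi, if_neg hi, psDeriv_X_sq_self]
    · rw [Matrix.diagonal_apply_ne _ hij]
      by_cases hi : (i : ℕ) < n - 2
      · rw [if_pos hi, psDeriv_X_ne (Ne.symm hij)]
      · rw [if_neg hi, psDeriv_X_sq_ne (Ne.symm hij)]
  rw [jacobianPS, hM, Matrix.det_diagonal]
  have hfilter : Finset.univ.filter (fun i : Fin n => ¬ (i : ℕ) < n - 2) =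
      {(⟨n - 2, by have := hn; omega⟩ : Fin n), ⟨n - 1, by have := hn; omega⟩} := by
    ext i
    simp only [Finset.mem_filter, Finset.mem_univ, true_and, Finset.mem_insert,
      Finset.mem_singleton, Fin.ext_iff, Fin.val_mk, not_lt]
    have := i.isLt
    omega
  rw [Finset.prod_ite, Finset.prod_const_one, one_mul, hfilter,
    Finset.prod_pair (fin_ne hn)]
  ring

end Jac

section Glue
variable {k : Type} [Field k] {n : ℕ}

lemma gen_wOrder (hn : 2 ≤ n) (i : Fin n) :
    ((if (i : ℕ) < n - 2 then (X i : MvPowerSeries (Fin n) k) else X i ^ 2)).weightedOrder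
      (wt n) = 2 := by
  by_cases hi : (i : ℕ) < n - 2
  · rw [if_pos hi, X_def, weightedOrder_monomial_of_ne_zero (wt n) one_ne_zero,
      weight_single, one_mul]
    unfold wt
    rw [if_pos hi]
    rfl
  · rw [if_neg hi, X_pow_eq, weightedOrder_monomial_of_ne_zero (wt n) one_ne_zero,
      weight_single]
    unfold wt
    rw [if_neg hi]
    rfl

lemma span_le_ordId (hn : 2 ≤ n) :
    Ideal.span (Set.range fun i : Fin n =>
        if (i : ℕ) < n - 2 then (X i : MvPowerSeries (Fin n) k) else X i ^ 2) ≤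
      ordId k n 2 := by
  rw [Ideal.span_le]
  rintro _ ⟨i, rfl⟩
  simp only [SetLike.mem_coe, mem_ordId]
  rw [gen_wOrder hn i]
  simp

lemma monomial_DD_mem (hn : 2 ≤ n) (j : Fin (n + 1)) :
    (monomial (DD n hn j) 1 : MvPowerSeries (Fin n) k) ∈
      ((Set.range fun i : Fin (n - 2) =>
          (X (Fin.castLE (by have := hn; omega) i) : MvPowerSeries (Fin n) k)) ∪
        {X (⟨n - 2, by have := hn; omega⟩ : Fin n) ^ 2,
         X (⟨n - 2, by have := hn; omega⟩ : Fin n) * X (⟨n - 1, by have := hn; omega⟩ : Fin n),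
         X (⟨n - 1, by have := hn; omega⟩ : Fin n) ^ 2}) := by
  rw [DD]
  split_ifs with h1 h2 h3
  · exact Or.inl ⟨⟨(j : ℕ), h1⟩, rfl⟩
  · right
    left
    rw [X_pow_eq]
  · right
    right
    left
    rw [X_def, X_def, monomial_mul_monomial, one_mul]
  · right
    right
    right
    rw [Set.mem_singleton_iff, X_pow_eq]

lemma jac_eq_monomial (hn : 2 ≤ n) :
    (4 : MvPowerSeries (Fin n) k) *
        (X (⟨n - 2, by have := hn; omega⟩ : Fin n) * X (⟨n - 1, by have := hn; omega⟩ : Fin n)) =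
      monomial (single (⟨n - 2, by have := hn; omega⟩ : Fin n) 1 + single (⟨n - 1, by have := hn; omega⟩ : Fin n) 1)
        (4 : k) := by
  rw [X_def, X_def, monomial_mul_monomial, one_mul,
    show (4 : MvPowerSeries (Fin n) k) = C 4 from (map_ofNat _ 4).symm,
    ← smul_eq_C_mul, ← map_smul]
  norm_num

lemma jac_wOrder (hn : 2 ≤ n) [CharZero k] :
    ((4 : MvPowerSeries (Fin n) k) *
        (X (⟨n - 2, by have := hn; omega⟩ : Fin n) * X (⟨n - 1, by have := hn; omega⟩ : Fin n))).weightedOrder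
      (wt n) = 2 := by
  rw [jac_eq_monomial hn, weightedOrder_monomial_of_ne_zero (wt n) (by norm_num),
    map_add, weight_single, weight_single, wt_a hn, wt_b hn]
  rfl

end Glue

end StmtAux

/-- For `f = (X_1,…,X_{n-2}, X_{n-1}², X_n²)` in `k[[X_1,…,X_n]]` (char `k` = 0, `n ≥ 2`),
generating the ideal `I`: the Jacobian `J_X(f)` equals `4·X_{n-1}·X_n`, it belongs to the
integral closure of `I`, the integral closure of `I` is
`(X_1,…,X_{n-2}, X_{n-1}², X_{n-1}X_n, X_n²)`, but for no rational `θ = p/q > 1` does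
`J_X(f)^q` belong to the integral closure of `I^p`. -/
theorem stmt18 {k : Type} [Field k] [CharZero k] {n : ℕ} (hn : 2 ≤ n)
    (f : Fin n → MvPowerSeries (Fin n) k)
    (hf : f = fun i : Fin n =>
      if (i : ℕ) < n - 2 then MvPowerSeries.X i else MvPowerSeries.X i ^ 2) :
    jacobianPS f =
      4 * (MvPowerSeries.X (⟨n - 2, by omega⟩ : Fin n) *
           MvPowerSeries.X (⟨n - 1, by omega⟩ : Fin n)) ∧
    MemIntClosure (Ideal.span (Set.range f)) (jacobianPS f) ∧
    {x | MemIntClosure (Ideal.span (Set.range f)) x} =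
      ↑(Ideal.span
        ((Set.range fun i : Fin (n - 2) =>
            (MvPowerSeries.X (Fin.castLE (by omega) i) : MvPowerSeries (Fin n) k)) ∪
          {MvPowerSeries.X (⟨n - 2, by omega⟩ : Fin n) ^ 2,
           MvPowerSeries.X (⟨n - 2, by omega⟩ : Fin n) *
             MvPowerSeries.X (⟨n - 1, by omega⟩ : Fin n),
           MvPowerSeries.X (⟨n - 1, by omega⟩ : Fin n) ^ 2})) ∧
    ∀ p q : ℕ, 0 < q → q < p →
      ¬ MemIntClosure (Ideal.span (Set.range f) ^ p) (jacobianPS f ^ q) := by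
  classical
  subst hf
  have hjac := StmtAux.jacobian_eq (k := k) hn
  have hI2 := StmtAux.span_le_ordId (k := k) hn
  have ha2 : (MvPowerSeries.X (⟨n - 2, by omega⟩ : Fin n) : MvPowerSeries (Fin n) k) ^ 2 ∈
      Ideal.span (Set.range fun i : Fin n =>
        if (i : ℕ) < n - 2 then MvPowerSeries.X i else MvPowerSeries.X i ^ 2) :=
    Ideal.subset_span ⟨⟨n - 2, by omega⟩, by
      simp only [Fin.val_mk]
      rw [if_neg (by omega)]⟩
  have hb2 : (MvPowerSeries.X (⟨n - 1, by omega⟩ : Fin n) : MvPowerSeries (Fin n) k) ^ 2 ∈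
      Ideal.span (Set.range fun i : Fin n =>
        if (i : ℕ) < n - 2 then MvPowerSeries.X i else MvPowerSeries.X i ^ 2) :=
    Ideal.subset_span ⟨⟨n - 1, by omega⟩, by
      simp only [Fin.val_mk]
      rw [if_neg (by omega)]⟩
  refine ⟨hjac, ?_, ?_, ?_⟩
  · -- the Jacobian is integral over I
    rw [hjac]
    refine ⟨2, ![0, -(16 * ((MvPowerSeries.X (⟨n - 2, by omega⟩ : Fin n)) ^ 2 *
      (MvPowerSeries.X (⟨n - 1, by omega⟩ : Fin n)) ^ 2))], two_pos, ?_, ?_⟩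
    · intro i
      fin_cases i
      · simpa using Ideal.zero_mem _
      · show -(16 * _) ∈ _ ^ ((1 : ℕ) + 1)
        refine neg_mem (Ideal.mul_mem_left _ 16 ?_)
        rw [pow_two]
        exact Ideal.mul_mem_mul ha2 hb2
    · rw [Fin.sum_univ_two]
      norm_num
      ring
  · -- the integral closure of I
    ext x
    simp only [Set.mem_setOf_eq, SetLike.mem_coe]
    constructor
    · intro hx
      have hW : (2 : ℕ∞) ≤ x.weightedOrder (StmtAux.wt n) := by
        by_contra hWc
        push_neg at hWc
        have hne : x.weightedOrder (StmtAux.wt n) ≠ ⊤ := by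
          intro h
          rw [h] at hWc
          exact absurd hWc (by simp)
        have hxe : x.weightedOrder (StmtAux.wt n) =
            (((x.weightedOrder (StmtAux.wt n)).toNat : ℕ) : ℕ∞) := (ENat.coe_toNat hne).symm
        have he2 : (x.weightedOrder (StmtAux.wt n)).toNat < 2 := by
          rw [hxe] at hWc
          exact_mod_cast hWc
        exact StmtAux.core hI2 hxe he2 hx
      rw [StmtAux.decomp hn (fun d hd =>
        MvPowerSeries.coeff_eq_zero_of_lt_weightedOrder (StmtAux.wt n)
          (lt_of_lt_of_le (by exact_mod_cast hd) hW))]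
      exact Ideal.sum_mem _ fun j _ =>
        Ideal.mul_mem_right _ _ (Ideal.subset_span (StmtAux.monomial_DD_mem hn j))
    · intro hx
      have hset : ((Set.range fun i : Fin (n - 2) =>
            (MvPowerSeries.X (Fin.castLE (by omega) i) : MvPowerSeries (Fin n) k)) ∪
          {MvPowerSeries.X (⟨n - 2, by omega⟩ : Fin n) ^ 2,
           MvPowerSeries.X (⟨n - 2, by omega⟩ : Fin n) *
             MvPowerSeries.X (⟨n - 1, by omega⟩ : Fin n),
           MvPowerSeries.X (⟨n - 1, by omega⟩ : Fin n) ^ 2}) =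
          (((Set.range fun i : Fin (n - 2) =>
            (MvPowerSeries.X (Fin.castLE (by omega) i) : MvPowerSeries (Fin n) k)) ∪
          {MvPowerSeries.X (⟨n - 2, by omega⟩ : Fin n) ^ 2,
           MvPowerSeries.X (⟨n - 1, by omega⟩ : Fin n) ^ 2}) ∪
          {MvPowerSeries.X (⟨n - 2, by omega⟩ : Fin n) *
             MvPowerSeries.X (⟨n - 1, by omega⟩ : Fin n)}) := by
        ext t
        simp only [Set.mem_union, Set.mem_insert_iff, Set.mem_singleton_iff]
        tauto
      rw [hset, Ideal.span_union] at hx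
      obtain ⟨y, hy, z, hz, rfl⟩ := Submodule.mem_sup.mp hx
      obtain ⟨r, hr⟩ := (Ideal.mem_span_singleton).mp hz
      have hyI : y ∈ Ideal.span (Set.range fun i : Fin n =>
          if (i : ℕ) < n - 2 then MvPowerSeries.X i else MvPowerSeries.X i ^ 2) := by
        refine Ideal.span_le.mpr ?_ hy
        rintro t (⟨i, rfl⟩ | ht)
        · exact Ideal.subset_span ⟨Fin.castLE (by omega) i, by
            simp only [Fin.coe_castLE]
            rw [if_pos i.isLt]
            ⟩
        · rcases ht with rfl | rfl
          · exact ha2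
          · exact hb2
      refine ⟨2, ![-(2 * y), y ^ 2 - z ^ 2], two_pos, ?_, ?_⟩
      · intro i
        fin_cases i
        · show -(2 * y) ∈ _ ^ ((0 : ℕ) + 1)
          rw [zero_add, pow_one]
          exact neg_mem (Ideal.mul_mem_left _ 2 hyI)
        · show y ^ 2 - z ^ 2 ∈ _ ^ ((1 : ℕ) + 1)
          refine sub_mem ?_ ?_
          · rw [pow_two, pow_two]
            exact Ideal.mul_mem_mul hyI hyI
          · have hz2 : z ^ 2 =
                ((MvPowerSeries.X (⟨n - 2, by omega⟩ : Fin n)) ^ 2 *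
                 (MvPowerSeries.X (⟨n - 1, by omega⟩ : Fin n)) ^ 2) * r ^ 2 := by
              rw [hr]
              ring
            rw [hz2]
            refine Ideal.mul_mem_right _ _ ?_
            rw [pow_two]
            exact Ideal.mul_mem_mul ha2 hb2
      · rw [Fin.sum_univ_two]
        norm_num
        ring
  · -- no θ > 1
    intro p q hq hpq hcl
    rw [hjac] at hcl
    have hvq : (((4 : MvPowerSeries (Fin n) k) *
        (MvPowerSeries.X (⟨n - 2, by omega⟩ : Fin n) *
         MvPowerSeries.X (⟨n - 1, by omega⟩ : Fin n))) ^ q).weightedOrder (StmtAux.wt n) =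
        ((2 * q : ℕ) : ℕ∞) := by
      rw [StmtAux.weightedOrder_pow, StmtAux.jac_wOrder hn]
      push_cast
      ring
    have hIp := StmtAux.pow_ordId_le hI2 p
    exact StmtAux.core hIp hvq (by omega) hcl
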